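/- arXiv:1710.01929 — 2 statements merged into one kernel-verified Lean document; each statement's English description precedes it below -/
import Mathlib

section
/- Let $n \geq 1$, $p \geq 1$, and $0 < \theta < 1$. Let $q \subset \mathbb{R}^n$ be a cube centered at a point $x_0$ with side length $\ell$, and let $\theta q$ denote the cube with the same center and side length $\theta \ell$. Then for every affine function $a : \mathbb{R}^n \to \mathbb{R}$ one has $\|a\|_{L^p(q)} \leq \theta^{-(n/p + 1)} \|a\|_{L^p(\theta q)}$. -/
open MeasureTheory

private lemma my_convexOn_abs_rpow {p : ℝ} (hp : 1 ≤ p) :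
    ConvexOn ℝ Set.univ (fun x : ℝ => |x| ^ p) := by
  have himg : (fun x : ℝ => |x|) '' Set.univ = Set.Ici 0 := by
    ext x
    constructor
    · rintro ⟨y, -, rfl⟩; exact abs_nonneg y
    · intro hx; exact ⟨x, Set.mem_univ x, abs_of_nonneg hx⟩
  have habs : ConvexOn ℝ Set.univ (fun x : ℝ => |x|) := by
    exact (convexOn_univ_norm : ConvexOn ℝ Set.univ (norm : ℝ → ℝ))
  have hg : ConvexOn ℝ ((fun x : ℝ => |x|) '' Set.univ) (fun x : ℝ => x ^ p) := by
    rw [himg]; exact convexOn_rpow hp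
  have hmono : MonotoneOn (fun x : ℝ => x ^ p) ((fun x : ℝ => |x|) '' Set.univ) := by
    rw [himg]
    intro x hx y hy hxy
    exact Real.rpow_le_rpow hx hxy (le_trans zero_le_one hp)
  exact hg.comp habs hmono

/-- For convex even combination: `t ↦ |s+t|^p + |s-t|^p` is monotone in `|t|`. -/
private lemma my_even_mono {p : ℝ} (hp : 1 ≤ p) (s t t' : ℝ) (h : |t| ≤ |t'|) :
    |s + t| ^ p + |s - t| ^ p ≤ |s + t'| ^ p + |s - t'| ^ p := by
  set g : ℝ → ℝ := fun t => |s + t| ^ p + |s - t| ^ p with hg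
  have hconv : ConvexOn ℝ Set.univ g := by
    have h1 : ConvexOn ℝ Set.univ (fun t : ℝ => |s + t| ^ p) := by
      have := (my_convexOn_abs_rpow hp).translate_right s
      exact this
    have h2 : ConvexOn ℝ Set.univ (fun t : ℝ => |s - t| ^ p) := by
      have := ((my_convexOn_abs_rpow hp).translate_right s).comp_linearMap (-LinearMap.id)
      simp only [sub_eq_add_neg]; exact this
    exact h1.add h2
  have heven : ∀ x : ℝ, g (-x) = g x := by
    intro x
    simp only [hg]
    rw [show s + -x = s - x by ring, show s - -x = s + x by ring]
    exact add_comm _ _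
  have habs : ∀ x : ℝ, g x = g |x| := by
    intro x
    rcases abs_choice x with h' | h'
    · rw [h']
    · rw [h', heven]
  show g t ≤ g t'
  rw [habs t, habs t']
  set a := |t| with ha
  set a' := |t'| with ha'
  have ha0 : 0 ≤ a := abs_nonneg t
  have ha0' : 0 ≤ a' := abs_nonneg t'
  rcases eq_or_lt_of_le (h.trans_eq rfl) with heq | hlt
  · rw [heq]
  · have ha'pos : 0 < a' := lt_of_le_of_lt ha0 hlt
    have hlam : (0:ℝ) ≤ (a' + a) / (2 * a') := by positivity
    have hmu : (0:ℝ) ≤ (a' - a) / (2 * a') := by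
      apply div_nonneg (by linarith) (by linarith)
    have hsum : (a' + a) / (2 * a') + (a' - a) / (2 * a') = 1 := by
      field_simp
      ring
    have hcomb : ((a' + a) / (2 * a')) • a' + ((a' - a) / (2 * a')) • (-a') = a := by
      simp only [smul_eq_mul]
      field_simp
      ring
    have := hconv.2 (Set.mem_univ a') (Set.mem_univ (-a')) hlam hmu hsum
    rw [hcomb] at this
    calc g a ≤ ((a' + a) / (2 * a')) • g a' + ((a' - a) / (2 * a')) • g (-a') := this
      _ = ((a' + a) / (2 * a') + (a' - a) / (2 * a')) * g a' := by
          rw [heven a']; simp only [smul_eq_mul]; ring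
      _ = g a' := by rw [hsum, one_mul]

/-- Pointwise key inequality. -/
private lemma my_key {p : ℝ} (hp : 1 ≤ p) {θ : ℝ} (hθ : 0 < θ) (hθ1 : θ ≤ 1) (s c : ℝ) :
    θ ^ p * (|s + c| ^ p + |s - c| ^ p) ≤ |θ * s + c| ^ p + |θ * s - c| ^ p := by
  have hθ0 : (0:ℝ) ≤ θ := hθ.le
  have h1 : θ ^ p * |s + c| ^ p = |θ * s + θ * c| ^ p := by
    rw [← Real.mul_rpow hθ0 (abs_nonneg _)]
    congr 1
    rw [show θ * s + θ * c = θ * (s + c) by ring, abs_mul, abs_of_nonneg hθ0]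
  have h2 : θ ^ p * |s - c| ^ p = |θ * s - θ * c| ^ p := by
    rw [← Real.mul_rpow hθ0 (abs_nonneg _)]
    congr 1
    rw [show θ * s - θ * c = θ * (s - c) by ring, abs_mul, abs_of_nonneg hθ0]
  rw [mul_add, h1, h2]
  exact my_even_mono hp (θ * s) (θ * c) c (by
    rw [abs_mul, abs_of_nonneg hθ0]
    calc θ * |c| ≤ 1 * |c| := by apply mul_le_mul_of_nonneg_right hθ1 (abs_nonneg c)
      _ = |c| := one_mul _)

/-- Scaling change of variables on `Fin n → ℝ`. -/
private lemma my_scale_integral (n : ℕ) {θ : ℝ} (hθ : 0 < θ) (t : Fin n → ℝ)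
    (f : (Fin n → ℝ) → ℝ) :
    ∫ x, f x = θ ^ n * ∫ w, f (θ • w + t) := by
  have h := Measure.integral_comp_smul volume (fun x => f (x + t)) θ
  simp only [Module.finrank_pi, Fintype.card_fin, smul_eq_mul] at h
  rw [integral_add_right_eq_self (μ := volume) f t] at h
  rw [show (∫ w, f (θ • w + t)) = ∫ x, (fun x => f (x + t)) (θ • x) from rfl, h]
  rw [abs_of_nonneg (by positivity)]
  field_simp

/-- Reflection invariance. -/
private lemma my_refl_integral (n : ℕ) (x₀ : Fin n → ℝ) (f : (Fin n → ℝ) → ℝ) :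
    ∫ x, f x = ∫ w, f ((2:ℝ) • x₀ - w) := by
  have h1 : (∫ w, f ((2:ℝ) • x₀ - w)) = ∫ w, f ((2:ℝ) • x₀ + -w) := by
    simp only [sub_eq_add_neg]
  have h2 := integral_neg_eq_self (fun w => f ((2:ℝ) • x₀ + w)) (volume : Measure (Fin n → ℝ))
  have h3 : (∫ w, f ((2:ℝ) • x₀ + w)) = ∫ w, f (w + (2:ℝ) • x₀) := by
    congr 1; funext w; rw [add_comm]
  rw [h1, h2, h3, integral_add_right_eq_self (μ := volume) f]

theorem stmt_3 (n : ℕ) (hn : 1 ≤ n) (p : ℝ) (hp : 1 ≤ p) (θ : ℝ) (hθ : 0 < θ) (hθ1 : θ < 1)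
    (x₀ : Fin n → ℝ) (ℓ : ℝ) (hℓ : 0 < ℓ) (v : Fin n → ℝ) (b : ℝ) :
    (∫ x in {x : Fin n → ℝ | ∀ i, |x i - x₀ i| < ℓ / 2}, |∑ i, v i * x i + b| ^ p) ^ (1 / p)
      ≤ θ ^ (-((n : ℝ) / p + 1)) *
        (∫ x in {x : Fin n → ℝ | ∀ i, |x i - x₀ i| < θ * ℓ / 2},
            |∑ i, v i * x i + b| ^ p) ^ (1 / p) := by
  have hp0 : 0 < p := lt_of_lt_of_le one_pos hp
  set Qb : Set (Fin n → ℝ) := {x | ∀ i, |x i - x₀ i| < ℓ / 2} with hQbdef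
  set Qs : Set (Fin n → ℝ) := {x | ∀ i, |x i - x₀ i| < θ * ℓ / 2} with hQsdef
  set K : ℝ := ∑ i, v i * x₀ i with hK
  -- measurability
  have hQb_eq : Qb = Set.pi Set.univ (fun i => Set.Ioo (x₀ i - ℓ/2) (x₀ i + ℓ/2)) := by
    ext x
    simp only [hQbdef, Set.mem_setOf_eq, Set.mem_pi, Set.mem_univ, forall_true_left,
      Set.mem_Ioo, abs_lt]
    constructor <;> intro h i <;> obtain ⟨h1, h2⟩ := h i <;> constructor <;> linarith
  have hQs_eq : Qs = Set.pi Set.univ (fun i => Set.Ioo (x₀ i - θ*ℓ/2) (x₀ i + θ*ℓ/2)) := by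
    ext x
    simp only [hQsdef, Set.mem_setOf_eq, Set.mem_pi, Set.mem_univ, forall_true_left,
      Set.mem_Ioo, abs_lt]
    constructor <;> intro h i <;> obtain ⟨h1, h2⟩ := h i <;> constructor <;> linarith
  have hQb_meas : MeasurableSet Qb := by
    rw [hQb_eq]; exact MeasurableSet.univ_pi fun i => measurableSet_Ioo
  have hQs_meas : MeasurableSet Qs := by
    rw [hQs_eq]; exact MeasurableSet.univ_pi fun i => measurableSet_Ioo
  -- integrability
  have hint : ∀ d e : ℝ,
      IntegrableOn (fun w : Fin n → ℝ => |d * (∑ i, v i * w i - K) + e| ^ p) Qb volume := by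
    intro d e
    have hcont : Continuous (fun w : Fin n → ℝ => |d * (∑ i, v i * w i - K) + e| ^ p) := by
      apply Continuous.rpow_const
      · apply Continuous.abs
        apply Continuous.add _ continuous_const
        apply Continuous.mul continuous_const
        apply Continuous.sub _ continuous_const
        exact continuous_finset_sum _ fun i _ => (continuous_const.mul (continuous_apply i))
      · intro x; right; positivity
    have hKc : IsCompact (Set.pi Set.univ (fun i => Set.Icc (x₀ i - ℓ/2) (x₀ i + ℓ/2))) :=
      isCompact_univ_pi fun i => isCompact_Icc
    have hsub : Qb ⊆ Set.pi Set.univ (fun i => Set.Icc (x₀ i - ℓ/2) (x₀ i + ℓ/2)) := by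
      rw [hQb_eq]
      exact Set.pi_mono fun i _ => Set.Ioo_subset_Icc_self
    exact (hcont.continuousOn.integrableOn_compact hKc).mono_set hsub
  -- the value of the affine function
  have hval_base : ∀ w : Fin n → ℝ, ∑ i, v i * w i + b = 1 * (∑ i, v i * w i - K) + (K + b) := by
    intro w; ring
  -- Step A : change of variables
  have hmem_scale : ∀ w : Fin n → ℝ, (θ • w + (1-θ) • x₀) ∈ Qs ↔ w ∈ Qb := by
    intro w
    simp only [hQsdef, hQbdef, Set.mem_setOf_eq, Pi.add_apply, Pi.smul_apply, smul_eq_mul]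
    constructor <;> intro h i <;> have hi := h i
    · have : |θ * w i + (1 - θ) * x₀ i - x₀ i| = θ * |w i - x₀ i| := by
        rw [show θ * w i + (1 - θ) * x₀ i - x₀ i = θ * (w i - x₀ i) by ring, abs_mul,
          abs_of_pos hθ]
      rw [this] at hi
      have := (mul_lt_mul_iff_right₀ hθ).1 (by linarith [hi] : θ * |w i - x₀ i| < θ * (ℓ / 2))
      exact this
    · rw [show θ * w i + (1 - θ) * x₀ i - x₀ i = θ * (w i - x₀ i) by ring, abs_mul,
        abs_of_pos hθ]
      calc θ * |w i - x₀ i| < θ * (ℓ / 2) := (mul_lt_mul_iff_right₀ hθ).2 hi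
        _ = θ * ℓ / 2 := by ring
  have hval_scale : ∀ w : Fin n → ℝ,
      ∑ i, v i * (θ • w + (1-θ) • x₀) i + b = θ * (∑ i, v i * w i - K) + (K + b) := by
    intro w
    have : ∀ i, v i * (θ • w + (1-θ) • x₀) i
        = θ * (v i * w i) + (1 - θ) * (v i * x₀ i) := by
      intro i
      simp only [Pi.add_apply, Pi.smul_apply, smul_eq_mul]
      ring
    rw [Finset.sum_congr rfl fun i _ => this i, Finset.sum_add_distrib,
      ← Finset.mul_sum, ← Finset.mul_sum, hK]
    ring
  have hS : (∫ x in Qs, |∑ i, v i * x i + b| ^ p)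
      = θ ^ n * ∫ w in Qb, |θ * (∑ i, v i * w i - K) + (K + b)| ^ p := by
    rw [← integral_indicator hQs_meas, ← integral_indicator hQb_meas]
    rw [my_scale_integral n hθ ((1-θ) • x₀) (Qs.indicator fun x => |∑ i, v i * x i + b| ^ p)]
    congr 1
    apply integral_congr_ae
    apply Filter.Eventually.of_forall
    intro w
    dsimp only
    by_cases hw : w ∈ Qb
    · rw [Set.indicator_of_mem ((hmem_scale w).2 hw), Set.indicator_of_mem hw, hval_scale w]
    · rw [Set.indicator_of_notMem (fun h => hw ((hmem_scale w).1 h)),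
        Set.indicator_of_notMem hw]
  -- Step B : reflection
  have hmem_refl : ∀ w : Fin n → ℝ, ((2:ℝ) • x₀ - w) ∈ Qb ↔ w ∈ Qb := by
    intro w
    simp only [hQbdef, Set.mem_setOf_eq, Pi.sub_apply, Pi.smul_apply, smul_eq_mul]
    constructor <;> intro h i <;> have hi := h i
    · rwa [show 2 * x₀ i - w i - x₀ i = -(w i - x₀ i) by ring, abs_neg] at hi
    · rw [show 2 * x₀ i - w i - x₀ i = -(w i - x₀ i) by ring, abs_neg]; exact hi
  have hsum_refl : ∀ w : Fin n → ℝ,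
      ∑ i, v i * ((2:ℝ) • x₀ - w) i = 2 * K - ∑ i, v i * w i := by
    intro w
    have : ∀ i, v i * ((2:ℝ) • x₀ - w) i = 2 * (v i * x₀ i) - v i * w i := by
      intro i
      simp only [Pi.sub_apply, Pi.smul_apply, smul_eq_mul]
      ring
    rw [Finset.sum_congr rfl fun i _ => this i, Finset.sum_sub_distrib, ← Finset.mul_sum, hK]
  have hrefl : ∀ d : ℝ,
      (∫ w in Qb, |d * (∑ i, v i * w i - K) + (K + b)| ^ p)
        = ∫ w in Qb, |-(d * (∑ i, v i * w i - K)) + (K + b)| ^ p := by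
    intro d
    rw [← integral_indicator hQb_meas, ← integral_indicator hQb_meas]
    rw [my_refl_integral n x₀ (Qb.indicator fun w => |d * (∑ i, v i * w i - K) + (K + b)| ^ p)]
    congr 1
    funext w
    by_cases hw : w ∈ Qb
    · rw [Set.indicator_of_mem ((hmem_refl w).2 hw), Set.indicator_of_mem hw]
      rw [hsum_refl w]
      congr 2
      ring
    · rw [Set.indicator_of_notMem (fun h => hw ((hmem_refl w).1 h)),
        Set.indicator_of_notMem hw]
  -- abbreviations
  set B : ℝ := ∫ w in Qb, |1 * (∑ i, v i * w i - K) + (K + b)| ^ p with hB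
  set C : ℝ := ∫ w in Qb, |θ * (∑ i, v i * w i - K) + (K + b)| ^ p with hC
  -- Step C : comparison
  have hcomp : θ ^ p * B ≤ C := by
    have hint1 := hint 1 (K + b)
    have hint1' : IntegrableOn
        (fun w : Fin n → ℝ => |-(1 * (∑ i, v i * w i - K)) + (K + b)| ^ p) Qb volume := by
      have := hint (-1) (K + b)
      simpa [neg_mul] using this
    have hintθ := hint θ (K + b)
    have hintθ' : IntegrableOn
        (fun w : Fin n → ℝ => |-(θ * (∑ i, v i * w i - K)) + (K + b)| ^ p) Qb volume := by
      have := hint (-θ) (K + b)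
      simpa [neg_mul] using this
    have hpoint : ∀ w ∈ Qb,
        θ ^ p * (|1 * (∑ i, v i * w i - K) + (K + b)| ^ p
          + |-(1 * (∑ i, v i * w i - K)) + (K + b)| ^ p)
        ≤ |θ * (∑ i, v i * w i - K) + (K + b)| ^ p
          + |-(θ * (∑ i, v i * w i - K)) + (K + b)| ^ p := by
      intro w _
      set s : ℝ := ∑ i, v i * w i - K
      set c : ℝ := K + b
      have h1 : |1 * s + c| = |s + c| := by rw [one_mul]
      have h2 : |-(1 * s) + c| = |s - c| := by
        rw [one_mul, show -s + c = -(s - c) by ring, abs_neg]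
      have h4 : |-(θ * s) + c| = |θ * s - c| := by
        rw [show -(θ * s) + c = -(θ * s - c) by ring, abs_neg]
      rw [h1, h2, h4]
      exact my_key hp hθ hθ1.le s c
    have h12 : IntegrableOn (fun w : Fin n → ℝ =>
        |1 * (∑ i, v i * w i - K) + (K + b)| ^ p
          + |-(1 * (∑ i, v i * w i - K)) + (K + b)| ^ p) Qb volume := hint1.add hint1'
    have h34 : IntegrableOn (fun w : Fin n → ℝ =>
        |θ * (∑ i, v i * w i - K) + (K + b)| ^ p
          + |-(θ * (∑ i, v i * w i - K)) + (K + b)| ^ p) Qb volume := hintθ.add hintθ'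
    have hmono := setIntegral_mono_on (h12.const_mul (θ ^ p)) h34 hQb_meas hpoint
    rw [integral_const_mul, integral_add hint1 hint1', integral_add hintθ hintθ'] at hmono
    rw [← hrefl 1, ← hrefl θ] at hmono
    rw [← hB, ← hC] at hmono
    linarith
  -- nonnegativity
  have hB0 : 0 ≤ B := setIntegral_nonneg hQb_meas fun w _ => by positivity
  have hC0 : 0 ≤ C := setIntegral_nonneg hQb_meas fun w _ => by positivity
  -- rewrite goal integrals
  have hgoal_lhs : (∫ x in Qb, |∑ i, v i * x i + b| ^ p) = B := by
    rw [hB]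
    apply setIntegral_congr_fun hQb_meas
    intro w _
    dsimp only
    rw [hval_base w]
  have hgoal_rhs : (∫ x in Qs, |∑ i, v i * x i + b| ^ p) = θ ^ n * C := hS
  rw [hgoal_lhs, hgoal_rhs]
  -- final arithmetic
  have hθp : (0:ℝ) < θ ^ p := Real.rpow_pos_of_pos hθ p
  have hθn : (0:ℝ) < θ ^ n := pow_pos hθ n
  have hBle : B ≤ θ ^ (-(n:ℝ)) * θ ^ (-p) * (θ ^ n * C) := by
    rw [Real.rpow_neg hθ.le, ← Real.rpow_natCast θ n, Real.rpow_neg hθ.le,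
      Real.rpow_natCast θ n]
    rw [show (θ ^ n : ℝ)⁻¹ * (θ ^ p)⁻¹ * (θ ^ n * C) = (θ ^ p)⁻¹ * C by
      field_simp]
    rw [le_inv_mul_iff₀ hθp]
    exact hcomp
  have hstep := Real.rpow_le_rpow hB0 hBle (by positivity : (0:ℝ) ≤ 1 / p)
  refine hstep.trans (le_of_eq ?_)
  have hfac : θ ^ (-(n:ℝ)) * θ ^ (-p) = θ ^ (-((n:ℝ) + p)) := by
    rw [← Real.rpow_add hθ]; ring_nf
  rw [hfac]
  have hYnn : (0:ℝ) ≤ θ ^ n * C := by positivity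
  rw [Real.mul_rpow (Real.rpow_nonneg hθ.le _) hYnn]
  congr 1
  rw [← Real.rpow_mul hθ.le]
  congr 1
  field_simp
end

section
/- Let $n \geq 1$, $p \geq 1$, $0 < \theta < 1$, and let $q \subset \mathbb{R}^n$ be a cube with concentric sub-cube $\theta q$. There exist constants $c > 0$ and $\varepsilon_0 > 0$, depending only on $n$, $p$, and $\theta$, such that whenever $\omega \subseteq q$ is measurable with $|\omega|/|q| \leq \varepsilon_0$, every affine function $a : \mathbb{R}^n \to \mathbb{R}$ satisfies $\int_\omega |a|^p\, dx \leq c\, \frac{|\omega|}{|q|} \int_{\theta q \setminus \omega} |a|^p\, dx$. -/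
open MeasureTheory Pointwise

/-- The scaled open unit cube. -/
def cubeAux (n : ℕ) (r : ℝ) : Set (Fin n → ℝ) := {x | ∀ i, |x i| < r / 2}

lemma cubeAux_eq (n : ℕ) (r : ℝ) :
    cubeAux n r = Set.pi Set.univ (fun _ : Fin n => Set.Ioo (-(r/2)) (r/2)) := by
  ext x
  simp [cubeAux, abs_lt, Set.mem_pi, and_comm]

lemma isOpen_cubeAux (n : ℕ) (r : ℝ) : IsOpen (cubeAux n r) := by
  rw [cubeAux_eq]
  exact isOpen_set_pi Set.finite_univ (fun i _ => isOpen_Ioo)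

lemma volume_cubeAux (n : ℕ) {r : ℝ} (hr : 0 < r) :
    volume (cubeAux n r) = ENNReal.ofReal r ^ n := by
  rw [cubeAux_eq, volume_pi_pi]
  simp [Real.volume_Ioo]

/-- The affine function attached to coefficients `w`. -/
noncomputable def affAux (n : ℕ) (w : (Fin n → ℝ) × ℝ) (x : Fin n → ℝ) : ℝ :=
  ∑ i, w.1 i * x i + w.2

noncomputable def FAux (n : ℕ) (p θ : ℝ) (w : (Fin n → ℝ) × ℝ) : ℝ :=
  ∫ x in cubeAux n θ, |affAux n w x| ^ p

lemma abs_affAux_le (n : ℕ) (w : (Fin n → ℝ) × ℝ) (x : Fin n → ℝ)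
    (hx : ∀ i, |x i| ≤ 1) : |affAux n w x| ≤ (n + 1) * ‖w‖ := by
  have h1 : |affAux n w x| ≤ (∑ i, |w.1 i * x i|) + |w.2| :=
    (abs_add_le _ _).trans (add_le_add_left (Finset.abs_sum_le_sum_abs _ _) _)
  have h2 : ∀ i : Fin n, |w.1 i * x i| ≤ ‖w‖ := by
    intro i
    rw [abs_mul]
    calc |w.1 i| * |x i| ≤ |w.1 i| * 1 := by
          exact mul_le_mul_of_nonneg_left (hx i) (abs_nonneg _)
    _ = |w.1 i| := mul_one _
    _ ≤ ‖w.1‖ := norm_le_pi_norm w.1 i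
    _ ≤ ‖w‖ := norm_fst_le w
  have h3 : |w.2| ≤ ‖w‖ := norm_snd_le w
  calc |affAux n w x| ≤ (∑ _i : Fin n, ‖w‖) + ‖w‖ := by
        refine h1.trans (add_le_add (Finset.sum_le_sum fun i _ => h2 i) h3)
    _ = n * ‖w‖ + 1 * ‖w‖ := by simp [Finset.sum_const, mul_comm]
    _ = (n + 1) * ‖w‖ := by ring

lemma continuous_affAux (n : ℕ) (w : (Fin n → ℝ) × ℝ) : Continuous (affAux n w) := by
  unfold affAux
  exact (continuous_finset_sum _ fun i _ =>
    (continuous_const.mul (continuous_apply i))).add continuous_const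

lemma continuous_absAffPow (n : ℕ) {p : ℝ} (hp : 0 ≤ p) (w : (Fin n → ℝ) × ℝ) :
    Continuous (fun x => |affAux n w x| ^ p) :=
  (continuous_affAux n w).abs.rpow_const (fun _ => Or.inr hp)

lemma continuous_affAux_param (n : ℕ) {p : ℝ} (hp : 0 ≤ p) (x : Fin n → ℝ) :
    Continuous (fun w : (Fin n → ℝ) × ℝ => |affAux n w x| ^ p) := by
  have h : Continuous (fun w : (Fin n → ℝ) × ℝ => affAux n w x) := by
    unfold affAux
    exact (continuous_finset_sum _ fun i _ =>
      (((continuous_apply i).comp continuous_fst).mul continuous_const)).add continuous_snd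
  exact h.abs.rpow_const (fun _ => Or.inr hp)

lemma integrableOn_absAffPow (n : ℕ) {p : ℝ} (hp : 0 ≤ p) (w : (Fin n → ℝ) × ℝ)
    {s : Set (Fin n → ℝ)} (hsm : MeasurableSet s) (hs : volume s ≠ ⊤) {M : ℝ}
    (hM : ∀ x ∈ s, |affAux n w x| ≤ M) :
    IntegrableOn (fun x => |affAux n w x| ^ p) s volume := by
  refine Measure.integrableOn_of_bounded hs
    (continuous_absAffPow n hp w).aestronglyMeasurable
    (M := M ^ p) ((ae_restrict_iff' hsm).2 (ae_of_all _ fun x hx => ?_))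
  rw [Real.norm_eq_abs, abs_of_nonneg (Real.rpow_nonneg (abs_nonneg _) _)]
  exact Real.rpow_le_rpow (abs_nonneg _) (hM x hx) hp

lemma volume_cubeAux_lt_top (n : ℕ) {θ : ℝ} (hθ : 0 < θ) : volume (cubeAux n θ) < ⊤ := by
  rw [volume_cubeAux n hθ]
  exact ENNReal.pow_lt_top ENNReal.ofReal_lt_top

lemma abs_affAux_le_cube (n : ℕ) {θ : ℝ} (hθ1 : θ ≤ 1) (w : (Fin n → ℝ) × ℝ)
    {x : Fin n → ℝ} (hx : x ∈ cubeAux n θ) : |affAux n w x| ≤ (n + 1) * ‖w‖ := by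
  refine abs_affAux_le n w x fun i => ?_
  have := hx i
  nlinarith [abs_nonneg (x i), this]

lemma continuous_FAux (n : ℕ) {p θ : ℝ} (hp : 0 ≤ p) (hθ : 0 < θ) (hθ1 : θ ≤ 1) :
    Continuous (FAux n p θ) := by
  rw [continuous_iff_continuousAt]
  intro w₀
  have hSm : MeasurableSet (cubeAux n θ) := (isOpen_cubeAux n θ).measurableSet
  refine continuousAt_of_dominated
    (Filter.Eventually.of_forall fun w =>
      (continuous_absAffPow n hp w).aestronglyMeasurable)
    (bound := fun _ => (((n : ℝ) + 1) * (‖w₀‖ + 1)) ^ p) ?_ ?_ ?_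
  · filter_upwards [Metric.ball_mem_nhds w₀ one_pos] with w hw
    refine (ae_restrict_iff' hSm).2 (ae_of_all _ fun x hx => ?_)
    rw [Real.norm_eq_abs, abs_of_nonneg (Real.rpow_nonneg (abs_nonneg _) _)]
    refine Real.rpow_le_rpow (abs_nonneg _)
      ((abs_affAux_le_cube n hθ1 w hx).trans ?_) hp
    have h1 : ‖w‖ ≤ ‖w₀‖ + 1 := by
      have := mem_ball_iff_norm.1 hw
      have h2 := norm_sub_norm_le w w₀
      linarith
    have : (0:ℝ) ≤ (n : ℝ) + 1 := by positivity
    nlinarith [norm_nonneg w]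
  · exact integrableOn_const (volume_cubeAux_lt_top n hθ).ne
  · exact ae_of_all _ fun x => (continuous_affAux_param n hp x).continuousAt

lemma volume_zeroSet (n : ℕ) {w : (Fin n → ℝ) × ℝ} (hw : w ≠ 0) :
    volume {x : Fin n → ℝ | affAux n w x = 0} = 0 := by
  by_cases hv : w.1 = 0
  · have hb : w.2 ≠ 0 := by
      intro h; exact hw (Prod.ext hv h)
    have : {x : Fin n → ℝ | affAux n w x = 0} = ∅ := by
      ext x; simp [affAux, hv, hb]
    simp [this]
  · obtain ⟨i₀, hi₀⟩ : ∃ i, w.1 i ≠ 0 := by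
      by_contra h
      push_neg at h
      exact hv (funext h)
    set φ : (Fin n → ℝ) →ₗ[ℝ] ℝ := ∑ i, w.1 i • (LinearMap.proj i) with hφ
    have hφ_apply : ∀ x, φ x = ∑ i, w.1 i * x i := by
      intro x
      simp [hφ, LinearMap.sum_apply, LinearMap.smul_apply, smul_eq_mul]
    have hker : LinearMap.ker φ ≠ ⊤ := by
      intro h
      have h1 : Pi.single i₀ (1:ℝ) ∈ LinearMap.ker φ := h ▸ Submodule.mem_top
      rw [LinearMap.mem_ker, hφ_apply] at h1
      simp [Pi.single_apply] at h1
      exact hi₀ h1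
    set x₂ : Fin n → ℝ := (w.2 / w.1 i₀) • (Pi.single i₀ (1:ℝ) : Fin n → ℝ) with hx₂
    have hφx₂ : φ x₂ = w.2 := by
      have h1 : φ (Pi.single i₀ (1:ℝ) : Fin n → ℝ) = w.1 i₀ := by
        rw [hφ_apply]; simp [Pi.single_apply]
      rw [hx₂, LinearMap.map_smul, h1, smul_eq_mul]
      field_simp
    have hset : {x : Fin n → ℝ | affAux n w x = 0}
        = (fun x => x + x₂) ⁻¹' (LinearMap.ker φ : Set (Fin n → ℝ)) := by
      ext x
      simp only [Set.mem_setOf_eq, Set.mem_preimage, SetLike.mem_coe, LinearMap.mem_ker,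
        map_add, hφx₂, affAux]
      rw [hφ_apply]
    rw [hset, measure_preimage_add_right]
    exact Measure.addHaar_submodule volume _ hker

lemma FAux_pos (n : ℕ) {p θ : ℝ} (hp : 0 < p) (hθ : 0 < θ) (hθ1 : θ ≤ 1)
    {w : (Fin n → ℝ) × ℝ} (hw : w ≠ 0) : 0 < FAux n p θ w := by
  have hSm : MeasurableSet (cubeAux n θ) := (isOpen_cubeAux n θ).measurableSet
  have hint : IntegrableOn (fun x => |affAux n w x| ^ p) (cubeAux n θ) volume :=
    integrableOn_absAffPow n hp.le w hSm (volume_cubeAux_lt_top n hθ).ne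
      (fun x hx => abs_affAux_le_cube n hθ1 w hx)
  rw [FAux, setIntegral_pos_iff_support_of_nonneg_ae
    (ae_of_all _ fun x => Real.rpow_nonneg (abs_nonneg _) _) hint]
  have hsupp : Function.support (fun x => |affAux n w x| ^ p)
      = {x | affAux n w x ≠ 0} := by
    ext x
    simp only [Function.mem_support, Set.mem_setOf_eq, ne_eq]
    rw [← not_iff_not, not_not, not_not]
    constructor
    · intro h
      rcases Real.rpow_eq_zero_iff_of_nonneg (abs_nonneg _) |>.1 h with ⟨h1, _⟩
      exact abs_eq_zero.1 h1
    · intro h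
      rw [h, abs_zero, Real.zero_rpow hp.ne']
  rw [hsupp]
  have hcover : cubeAux n θ ⊆
      {x : Fin n → ℝ | affAux n w x = 0} ∪ ({x | affAux n w x ≠ 0} ∩ cubeAux n θ) := by
    intro x hx
    by_cases h : affAux n w x = 0
    · exact Or.inl h
    · exact Or.inr ⟨h, hx⟩
  have hS_pos : 0 < volume (cubeAux n θ) := by
    rw [volume_cubeAux n hθ]
    exact ENNReal.pow_pos (ENNReal.ofReal_pos.2 hθ) n
  by_contra h
  push_neg at h
  have h0 : volume ({x | affAux n w x ≠ 0} ∩ cubeAux n θ) = 0 := le_antisymm h zero_le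
  have : volume (cubeAux n θ) ≤ 0 := by
    calc volume (cubeAux n θ)
        ≤ volume ({x : Fin n → ℝ | affAux n w x = 0})
          + volume ({x | affAux n w x ≠ 0} ∩ cubeAux n θ) :=
          (measure_mono hcover).trans (measure_union_le _ _)
      _ = 0 := by rw [volume_zeroSet n hw, h0, add_zero]
  exact absurd (this.trans_lt hS_pos).false (by simp)

lemma FAux_nonneg (n : ℕ) (p θ : ℝ) (w : (Fin n → ℝ) × ℝ) : 0 ≤ FAux n p θ w :=
  setIntegral_nonneg (isOpen_cubeAux n θ).measurableSet
    (fun x _ => Real.rpow_nonneg (abs_nonneg _) _)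

lemma FAux_smul (n : ℕ) (p θ : ℝ) (c : ℝ) (w : (Fin n → ℝ) × ℝ) :
    FAux n p θ (c • w) = |c| ^ p * FAux n p θ w := by
  unfold FAux
  rw [← integral_const_mul]
  refine setIntegral_congr_fun (isOpen_cubeAux n θ).measurableSet (fun x _ => ?_)
  have h : affAux n (c • w) x = c * affAux n w x := by
    simp only [affAux, Prod.smul_fst, Prod.smul_snd, Pi.smul_apply, smul_eq_mul,
      Finset.mul_sum, mul_add]
    ring_nf
  rw [h, abs_mul, Real.mul_rpow (abs_nonneg _) (abs_nonneg _)]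

lemma exists_K (n : ℕ) {p θ : ℝ} (hp : 1 ≤ p) (hθ : 0 < θ) (hθ1 : θ ≤ 1) :
    ∃ K : ℝ, 0 < K ∧ ∀ (w : (Fin n → ℝ) × ℝ) (x : Fin n → ℝ), (∀ i, |x i| ≤ 1) →
      |affAux n w x| ^ p ≤ K * FAux n p θ w := by
  have hp0 : (0:ℝ) ≤ p := le_trans zero_le_one hp
  have hppos : (0:ℝ) < p := lt_of_lt_of_le one_pos hp
  have hne : (Metric.sphere (0:(Fin n → ℝ) × ℝ) 1).Nonempty :=
    NormedSpace.sphere_nonempty.2 zero_le_one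
  obtain ⟨w₁, hw₁, hmin⟩ := (isCompact_sphere (0:(Fin n → ℝ) × ℝ) 1).exists_isMinOn hne
    ((continuous_FAux n hp0 hθ hθ1).continuousOn)
  have hw₁norm : ‖w₁‖ = 1 := mem_sphere_zero_iff_norm.1 hw₁
  have hw₁ne : w₁ ≠ 0 := by
    intro h; rw [h, norm_zero] at hw₁norm; exact one_ne_zero hw₁norm.symm
  set m : ℝ := FAux n p θ w₁ with hm_def
  have hm : 0 < m := FAux_pos n hppos hθ hθ1 hw₁ne
  have hlow : ∀ w : (Fin n → ℝ) × ℝ, m * ‖w‖ ^ p ≤ FAux n p θ w := by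
    intro w
    by_cases hw : w = 0
    · rw [hw, norm_zero, Real.zero_rpow hppos.ne', mul_zero]
      exact FAux_nonneg n p θ _
    · have hnw : 0 < ‖w‖ := norm_pos_iff.2 hw
      have hu : ‖(‖w‖⁻¹ • w)‖ = 1 := by
        rw [norm_smul, norm_inv, norm_norm, inv_mul_cancel₀ hnw.ne']
      have hmem : (‖w‖⁻¹ • w) ∈ Metric.sphere (0:(Fin n → ℝ) × ℝ) 1 :=
        mem_sphere_zero_iff_norm.2 hu
      have h1 : m ≤ FAux n p θ (‖w‖⁻¹ • w) := hmin hmem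
      have h2 : FAux n p θ w = ‖w‖ ^ p * FAux n p θ (‖w‖⁻¹ • w) := by
        conv_lhs => rw [← smul_inv_smul₀ hnw.ne' w]
        rw [FAux_smul, abs_of_nonneg hnw.le]
      rw [h2, mul_comm m]
      exact mul_le_mul_of_nonneg_left h1 (Real.rpow_nonneg hnw.le _)
  refine ⟨((n:ℝ) + 1) ^ p / m, by positivity, fun w x hx => ?_⟩
  have h1 : |affAux n w x| ^ p ≤ (((n:ℝ) + 1) * ‖w‖) ^ p :=
    Real.rpow_le_rpow (abs_nonneg _) (abs_affAux_le n w x hx) hp0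
  have h2 : (((n:ℝ) + 1) * ‖w‖) ^ p = ((n:ℝ) + 1) ^ p * ‖w‖ ^ p :=
    Real.mul_rpow (by positivity) (norm_nonneg _)
  have h3 : ‖w‖ ^ p ≤ FAux n p θ w / m := by
    rw [le_div_iff₀ hm, mul_comm]
    exact hlow w
  calc |affAux n w x| ^ p ≤ ((n:ℝ) + 1) ^ p * ‖w‖ ^ p := h1.trans_eq h2
    _ ≤ ((n:ℝ) + 1) ^ p * (FAux n p θ w / m) := by
        exact mul_le_mul_of_nonneg_left h3 (by positivity)
    _ = ((n:ℝ) + 1) ^ p / m * FAux n p θ w := by ring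

lemma setIntegral_theta_cube (n : ℕ) (p θ : ℝ) {x₀ : Fin n → ℝ} {ℓ : ℝ} (hℓ : 0 < ℓ)
    (v : Fin n → ℝ) (b : ℝ) :
    ∫ x in {x : Fin n → ℝ | ∀ i, |x i - x₀ i| < θ * ℓ / 2}, |∑ i, v i * x i + b| ^ p
      = ℓ ^ n * FAux n p θ (ℓ • v, b + ∑ i, v i * x₀ i) := by
  set g : (Fin n → ℝ) → ℝ := fun x => |∑ i, v i * x i + b| ^ p with hg
  set w : (Fin n → ℝ) × ℝ := (ℓ • v, b + ∑ i, v i * x₀ i) with hw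
  have hMP : MeasurePreserving (fun z : Fin n → ℝ => x₀ + z) volume volume :=
    measurePreserving_add_left volume x₀
  have hEmb : MeasurableEmbedding (fun z : Fin n → ℝ => x₀ + z) :=
    (MeasurableEquiv.addLeft x₀).measurableEmbedding
  have h1 := hMP.setIntegral_preimage_emb hEmb g
    {x : Fin n → ℝ | ∀ i, |x i - x₀ i| < θ * ℓ / 2}
  have hpre : (fun z : Fin n → ℝ => x₀ + z) ⁻¹'
      {x : Fin n → ℝ | ∀ i, |x i - x₀ i| < θ * ℓ / 2} = ℓ • cubeAux n θ := by
    ext z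
    rw [Set.mem_preimage, Set.mem_smul_set_iff_inv_smul_mem₀ hℓ.ne']
    simp only [Set.mem_setOf_eq, Pi.add_apply, add_sub_cancel_left, cubeAux,
      Pi.smul_apply, smul_eq_mul]
    refine forall_congr' fun i => ?_
    rw [abs_mul, abs_inv, abs_of_pos hℓ, inv_mul_eq_div, div_lt_iff₀ hℓ]
    constructor <;> intro h <;> linarith
  have h2 := Measure.setIntegral_comp_smul_of_pos volume
    (fun z => g (x₀ + z)) (cubeAux n θ) hℓ
  rw [Module.finrank_fin_fun] at h2
  have h3 : ∫ y in cubeAux n θ, g (x₀ + ℓ • y) = FAux n p θ w := by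
    refine setIntegral_congr_fun (isOpen_cubeAux n θ).measurableSet (fun y _ => ?_)
    simp only [hg, affAux, hw, Pi.add_apply, Pi.smul_apply, smul_eq_mul]
    congr 2
    have hterm : ∀ x : Fin n, v x * (x₀ x + ℓ * y x) = v x * x₀ x + ℓ * v x * y x :=
      fun x => by ring
    simp only [hterm, Finset.sum_add_distrib]
    ring
  rw [← h1, hpre]
  have hpow : (0:ℝ) < ℓ ^ n := pow_pos hℓ n
  have h4 : FAux n p θ w = (ℓ ^ n)⁻¹ * ∫ x in ℓ • cubeAux n θ, g (x₀ + x) := by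
    rw [← h3]
    simpa [smul_eq_mul] using h2
  rw [h4]
  field_simp

theorem stmt_4 (n : ℕ) (hn : 1 ≤ n) (p : ℝ) (hp : 1 ≤ p) (θ : ℝ) (hθ : 0 < θ) (hθ1 : θ < 1) :
    ∃ c : ℝ, 0 < c ∧ ∃ ε₀ : ℝ, 0 < ε₀ ∧
      ∀ (x₀ : Fin n → ℝ) (ℓ : ℝ), 0 < ℓ →
        ∀ (ω : Set (Fin n → ℝ)), MeasurableSet ω →
          ω ⊆ {x : Fin n → ℝ | ∀ i, |x i - x₀ i| < ℓ / 2} →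
          (volume ω).toReal / ℓ ^ n ≤ ε₀ →
          ∀ (v : Fin n → ℝ) (b : ℝ),
            ∫ x in ω, |∑ i, v i * x i + b| ^ p
              ≤ c * ((volume ω).toReal / ℓ ^ n) *
                ∫ x in {x : Fin n → ℝ | ∀ i, |x i - x₀ i| < θ * ℓ / 2} \ ω,
                  |∑ i, v i * x i + b| ^ p := by
  have hp0 : (0:ℝ) ≤ p := le_trans zero_le_one hp
  obtain ⟨K, hK, hKbound⟩ := exists_K n hp hθ hθ1.le
  refine ⟨2 * K, by positivity, (2 * K)⁻¹, by positivity, ?_⟩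
  intro x₀ ℓ hℓ ω hωm hωsub hωε v b
  set w : (Fin n → ℝ) × ℝ := (ℓ • v, b + ∑ i, v i * x₀ i) with hw
  have hfun : (fun x : Fin n → ℝ => |∑ i, v i * x i + b| ^ p)
      = fun x => |affAux n (v, b) x| ^ p := rfl
  -- pointwise facts on the big cube
  have hkey : ∀ x : Fin n → ℝ,
      affAux n (v, b) x = affAux n w (fun i => (x i - x₀ i) / ℓ) := by
    intro x
    simp only [affAux, hw, Pi.smul_apply, smul_eq_mul]
    have h : ∀ i : Fin n, ℓ * v i * ((x i - x₀ i) / ℓ) = v i * x i - v i * x₀ i := by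
      intro i; field_simp
    simp only [h, Finset.sum_sub_distrib]
    ring
  have hmemy : ∀ x : Fin n → ℝ, (∀ i, |x i - x₀ i| < ℓ / 2) →
      ∀ i, |(x i - x₀ i) / ℓ| ≤ 1 := by
    intro x hx i
    rw [abs_div, abs_of_pos hℓ, div_le_one hℓ]
    have := hx i; linarith
  have habs_q : ∀ x : Fin n → ℝ, (∀ i, |x i - x₀ i| < ℓ / 2) →
      |affAux n (v, b) x| ≤ ((n:ℝ) + 1) * ‖w‖ := by
    intro x hx
    rw [hkey x]
    exact abs_affAux_le n w _ (hmemy x hx)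
  have hq_bound : ∀ x : Fin n → ℝ, (∀ i, |x i - x₀ i| < ℓ / 2) →
      |affAux n (v, b) x| ^ p ≤ K * FAux n p θ w := by
    intro x hx
    rw [hkey x]
    exact hKbound w _ (hmemy x hx)
  -- measurability and finiteness of the cubes
  have hq_eq : {x : Fin n → ℝ | ∀ i, |x i - x₀ i| < ℓ / 2}
      = Set.pi Set.univ (fun i => Set.Ioo (x₀ i - ℓ / 2) (x₀ i + ℓ / 2)) := by
    ext x
    simp only [Set.mem_setOf_eq, Set.mem_pi, Set.mem_univ, Set.mem_Ioo, forall_const]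
    refine forall_congr' fun i => ?_
    rw [abs_lt]
    constructor <;> intro h <;> constructor <;> linarith [h.1, h.2]
  have hq_fin : volume {x : Fin n → ℝ | ∀ i, |x i - x₀ i| < ℓ / 2} < ⊤ := by
    rw [hq_eq, volume_pi_pi]
    refine ENNReal.prod_lt_top ?_
    intro i _
    rw [Real.volume_Ioo]
    exact ENNReal.ofReal_lt_top
  have hω_fin : volume ω ≠ ⊤ := ((measure_mono hωsub).trans_lt hq_fin).ne
  set θq : Set (Fin n → ℝ) := {x | ∀ i, |x i - x₀ i| < θ * ℓ / 2} with hθq_def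
  have hθq_eq : θq
      = Set.pi Set.univ (fun i => Set.Ioo (x₀ i - θ * ℓ / 2) (x₀ i + θ * ℓ / 2)) := by
    ext x
    simp only [hθq_def, Set.mem_setOf_eq, Set.mem_pi, Set.mem_univ, Set.mem_Ioo, forall_const]
    refine forall_congr' fun i => ?_
    rw [abs_lt]
    constructor <;> intro h <;> constructor <;> linarith [h.1, h.2]
  have hθqm : MeasurableSet θq := by
    rw [hθq_eq]
    exact (isOpen_set_pi Set.finite_univ (fun i _ => isOpen_Ioo)).measurableSet
  have hsub2 : θq ⊆ {x : Fin n → ℝ | ∀ i, |x i - x₀ i| < ℓ / 2} := by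
    intro x hx i
    have h1 := hx i
    have h2 : θ * ℓ < ℓ := by nlinarith
    linarith
  have hθq_fin : volume θq ≠ ⊤ := ((measure_mono hsub2).trans_lt hq_fin).ne
  -- integrability
  have hint_ω : IntegrableOn (fun x => |affAux n (v, b) x| ^ p) ω volume :=
    integrableOn_absAffPow n hp0 (v, b) hωm hω_fin (fun x hx => habs_q x (hωsub hx))
  have hint_θq : IntegrableOn (fun x => |affAux n (v, b) x| ^ p) θq volume :=
    integrableOn_absAffPow n hp0 (v, b) hθqm hθq_fin (fun x hx => habs_q x (hsub2 hx))
  -- step A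
  set Iω : ℝ := ∫ x in ω, |affAux n (v, b) x| ^ p with hIω_def
  have hA : Iω ≤ (volume ω).toReal * (K * FAux n p θ w) := by
    have hconst : IntegrableOn (fun _ => K * FAux n p θ w) ω volume :=
      integrableOn_const hω_fin
    have := setIntegral_mono_on hint_ω hconst hωm
      (fun x hx => hq_bound x (hωsub hx))
    rwa [setIntegral_const, smul_eq_mul] at this
  -- step B : change of variables
  have hB : (∫ x in θq, |affAux n (v, b) x| ^ p) = ℓ ^ n * FAux n p θ w := by
    rw [← hfun]
    exact setIntegral_theta_cube n p θ hℓ v b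
  -- step C : decomposition
  set I₁ : ℝ := ∫ x in θq \ ω, |affAux n (v, b) x| ^ p with hI₁_def
  set I₂ : ℝ := ∫ x in θq ∩ ω, |affAux n (v, b) x| ^ p with hI₂_def
  have hsplit : (∫ x in θq, |affAux n (v, b) x| ^ p) = I₁ + I₂ := by
    rw [hI₁_def, hI₂_def, ← setIntegral_union
      (Set.disjoint_left.2 fun x hx1 hx2 => hx1.2 hx2.2) (hθqm.inter hωm)
      (hint_θq.mono_set Set.diff_subset) (hint_θq.mono_set Set.inter_subset_left),
      Set.diff_union_inter]
  have hI₂_le : I₂ ≤ Iω := by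
    refine setIntegral_mono_set hint_ω
      (ae_of_all _ fun x => Real.rpow_nonneg (abs_nonneg _) _)
      (HasSubset.Subset.eventuallyLE Set.inter_subset_right)
  have hIω0 : 0 ≤ Iω := setIntegral_nonneg hωm fun x _ => Real.rpow_nonneg (abs_nonneg _) _
  have hI₁0 : 0 ≤ I₁ := setIntegral_nonneg (hθqm.diff hωm)
    fun x _ => Real.rpow_nonneg (abs_nonneg _) _
  -- arithmetic
  set t : ℝ := (volume ω).toReal / ℓ ^ n with ht_def
  have hpow : (0:ℝ) < ℓ ^ n := pow_pos hℓ n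
  have ht0 : 0 ≤ t := div_nonneg ENNReal.toReal_nonneg hpow.le
  have hKt : K * t ≤ 1 / 2 := by
    have h1 : K * t ≤ K * (2 * K)⁻¹ := mul_le_mul_of_nonneg_left hωε hK.le
    have h2 : K * (2 * K)⁻¹ = 1 / 2 := by field_simp
    linarith
  have hFw : FAux n p θ w = (I₁ + I₂) / ℓ ^ n := by
    rw [← hsplit, hB]
    field_simp
  have hA2 : Iω ≤ K * t * (I₁ + I₂) := by
    calc Iω ≤ (volume ω).toReal * (K * FAux n p θ w) := hA
      _ = K * t * (I₁ + I₂) := by rw [hFw, ht_def]; field_simp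
  show Iω ≤ 2 * K * t * I₁
  nlinarith [mul_le_mul_of_nonneg_left hI₂_le (mul_nonneg hK.le ht0),
    mul_le_mul_of_nonneg_right hKt hIω0]
end
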